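/- For all α, β > 0 with ω > 0 and Re λ > ω^(1/α), the Laplace transform of t ↦ t^(β-1) E_{α,β}(ω t^α) equals λ^(α-β)/(λ^α - ω), where E_{α,β}(z) = Σ_{n≥0} z^n / Γ(αn + β) is the two-parameter Mittag-Leffler function. -/

import Mathlib

open MeasureTheory Real Set Metric

set_option maxHeartbeats 1000000

lemma intOn_rpow_exp {s r : ℝ} (hs : 0 < s) (hr : 0 < r) :
    IntegrableOn (fun t : ℝ => t ^ (s - 1) * Real.exp (-(r * t))) (Ioi 0) := by
  have := integrableOn_rpow_mul_exp_neg_mul_rpow (p := 1) (s := s - 1) (b := r)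
    (by linarith) zero_lt_one hr
  simpa [Real.rpow_one] using this

lemma laplace_meas (s : ℝ) (z : ℂ) :
    AEStronglyMeasurable (fun t : ℝ => Complex.exp (-(z * t)) * ((t ^ (s - 1) : ℝ) : ℂ))
      (volume.restrict (Ioi 0)) := by
  apply ContinuousOn.aestronglyMeasurable _ measurableSet_Ioi
  apply ContinuousOn.mul
  · exact (Complex.continuous_exp.comp (by continuity)).continuousOn
  · exact Complex.continuous_ofReal.comp_continuousOn
      (fun t ht => ((continuousAt_rpow_const t (s-1) (Or.inl (ne_of_gt ht))).continuousWithinAt))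

lemma laplace_integrable {s : ℝ} (hs : 0 < s) {lam : ℂ} (hl : 0 < lam.re) :
    IntegrableOn (fun t : ℝ => Complex.exp (-(lam * t)) * ((t ^ (s - 1) : ℝ) : ℂ)) (Ioi 0) := by
  apply Integrable.mono' (intOn_rpow_exp hs hl)
  · exact laplace_meas s lam
  · filter_upwards [ae_restrict_mem measurableSet_Ioi] with t ht
    rw [norm_mul, Complex.norm_exp]
    rw [Complex.norm_real, Real.norm_of_nonneg (Real.rpow_nonneg (le_of_lt ht) _)]
    have : (-(lam * t)).re = -(lam.re * t) := by simp
    rw [this, mul_comm]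

lemma laplace_diffAt {s : ℝ} (hs : 0 < s) {z₀ : ℂ} (hz : 0 < z₀.re) :
    DifferentiableAt ℂ
      (fun z : ℂ => ∫ t in Ioi (0:ℝ), Complex.exp (-(z * t)) * ((t ^ (s - 1) : ℝ) : ℂ)) z₀ := by
    set ε := z₀.re / 2 with hε
    have hε0 : 0 < ε := by positivity
    have main := hasDerivAt_integral_of_dominated_loc_of_deriv_le
      (μ := volume.restrict (Ioi 0))
      (F := fun (z : ℂ) (t : ℝ) => Complex.exp (-(z * t)) * ((t ^ (s - 1) : ℝ) : ℂ))
      (F' := fun (z : ℂ) (t : ℝ) => (-(t:ℂ)) * Complex.exp (-(z * t)) * ((t ^ (s - 1) : ℝ) : ℂ))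
      (bound := fun t : ℝ => t ^ s * Real.exp (-(ε * t)))
      (x₀ := z₀) (Metric.ball_mem_nhds z₀ hε0) ?_ (laplace_integrable hs hz) ?_ ?_ ?_ ?_
    · exact main.2.differentiableAt
    · filter_upwards with z using laplace_meas s z
    · show AEStronglyMeasurable
          (fun t : ℝ => (-(t:ℂ)) * Complex.exp (-(z₀ * t)) * ((t ^ (s - 1) : ℝ) : ℂ))
          (volume.restrict (Ioi 0))
      apply ContinuousOn.aestronglyMeasurable _ measurableSet_Ioi
      apply ContinuousOn.mul
      · exact ((Complex.continuous_ofReal.neg).mul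
          (Complex.continuous_exp.comp (by continuity))).continuousOn
      · exact Complex.continuous_ofReal.comp_continuousOn
          (fun t ht => ((continuousAt_rpow_const t (s-1) (Or.inl (ne_of_gt ht))).continuousWithinAt))
    · filter_upwards [ae_restrict_mem measurableSet_Ioi] with t ht x hx
      have ht0 : (0:ℝ) < t := ht
      rw [norm_mul, norm_mul, Complex.norm_exp]
      rw [Complex.norm_real, Real.norm_of_nonneg (Real.rpow_nonneg ht0.le _)]
      have h1 : (-(x * t)).re = -(x.re * t) := by simp
      rw [h1]
      have h2 : ‖(-(t:ℂ))‖ = t := by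
        rw [norm_neg, Complex.norm_real, Real.norm_of_nonneg ht0.le]
      rw [h2]
      have hxre : ε < x.re := by
        have := Complex.abs_re_le_norm (x - z₀)
        have hd : ‖x - z₀‖ < ε := by
          rwa [mem_ball, Complex.dist_eq] at hx
        have : |x.re - z₀.re| < ε := lt_of_le_of_lt (by simpa using this) hd
        have := abs_lt.mp this
        simp only [hε] at *
        linarith [this.1]
      have hts : t ^ s = t * t ^ (s - 1) := by
        rw [← Real.rpow_one_add' ht0.le (by linarith)]
        ring_nf
      rw [hts]
      have : Real.exp (-(x.re * t)) ≤ Real.exp (-(ε * t)) := by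
        apply Real.exp_le_exp.mpr
        nlinarith
      calc t * Real.exp (-(x.re * t)) * t ^ (s - 1)
          ≤ t * Real.exp (-(ε * t)) * t ^ (s - 1) := by
            gcongr
        _ = t * t ^ (s - 1) * Real.exp (-(ε * t)) := by ring
    · have := intOn_rpow_exp (s := s + 1) (by linarith) hε0
      exact (by simpa [add_sub_cancel_right] using this :
        IntegrableOn (fun t : ℝ => t ^ s * Real.exp (-(ε * t))) (Ioi 0))
    · filter_upwards [ae_restrict_mem measurableSet_Ioi] with t ht x hx
      have hd : HasDerivAt (fun z : ℂ => -(z * (t:ℂ))) (-(t:ℂ)) x :=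
        ((hasDerivAt_mul_const (t:ℂ)).neg)
      have := (hd.cexp).mul_const ((t ^ (s - 1) : ℝ) : ℂ)
      convert this using 1
      exacts [rfl, by ring]


lemma laplace_cpow {s : ℝ} (hs : 0 < s) {lam : ℂ} (hl : 0 < lam.re) :
    ∫ t in Ioi (0:ℝ), Complex.exp (-(lam * t)) * ((t ^ (s - 1) : ℝ) : ℂ)
      = (Real.Gamma s : ℂ) / lam ^ (s : ℂ) := by
  set U : Set ℂ := {z | 0 < z.re} with hU
  have hUopen : IsOpen U := isOpen_lt continuous_const Complex.continuous_re
  set F : ℂ → ℂ := fun z => ∫ t in Ioi (0:ℝ), Complex.exp (-(z * t)) * ((t ^ (s - 1) : ℝ) : ℂ)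
    with hF
  set G : ℂ → ℂ := fun z => (Real.Gamma s : ℂ) / z ^ (s : ℂ) with hG
  have hFdiff : DifferentiableOn ℂ F U := fun z hz => (laplace_diffAt hs hz).differentiableWithinAt
  have hGdiff : DifferentiableOn ℂ G U := by
    intro z hz
    have hz' : 0 < z.re := hz
    have hzne : z ≠ 0 := fun h => by simp [h] at hz'
    have h1 : DifferentiableAt ℂ (fun z : ℂ => z ^ (s : ℂ)) z :=
      ((hasDerivAt_id z).cpow_const (Or.inl hz')).differentiableAt
    have h2 : z ^ (s : ℂ) ≠ 0 := by
      simp only [ne_eq, Complex.cpow_eq_zero_iff, not_and_or, not_not]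
      exact Or.inl hzne
    exact ((differentiableAt_const _).div h1 h2).differentiableWithinAt
  have hFG : EqOn F G U := by
    have hFa : AnalyticOnNhd ℂ F U := hFdiff.analyticOnNhd hUopen
    have hGa : AnalyticOnNhd ℂ G U := hGdiff.analyticOnNhd hUopen
    have hpre : IsPreconnected U := (convex_halfSpace_re_gt 0).isPreconnected
    have h1U : (1:ℂ) ∈ U := by simp [hU]
    refine hFa.eqOn_of_preconnected_of_frequently_eq hGa hpre h1U ?_
    -- frequently equal near 1
    have key : ∀ r : ℝ, 0 < r → F r = G r := by
      intro r hr
      have h1 : F r = ∫ t in Ioi (0:ℝ), (t:ℂ) ^ ((s:ℂ) - 1) * Complex.exp (-(r * t)) := by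
        rw [hF]
        refine setIntegral_congr_fun measurableSet_Ioi (fun t ht => ?_)
        have ht0 : (0:ℝ) < t := ht
        rw [Complex.ofReal_cpow ht0.le, mul_comm]
        push_cast
        ring_nf
      rw [h1, Complex.integral_cpow_mul_exp_neg_mul_Ioi (by simpa using hs) hr]
      rw [hG]
      have harg : (r:ℂ).arg ≠ π := by
        rw [Complex.arg_ofReal_of_nonneg hr.le]
        exact Real.pi_ne_zero.symm
      have : ((1/r : ℝ) : ℂ) = ((r:ℂ))⁻¹ := by push_cast; ring
      rw [show ((1/r : ℂ)) = ((r:ℂ))⁻¹ by ring, Complex.inv_cpow _ _ harg,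
        Complex.Gamma_ofReal]
      field_simp
    have hseq : Filter.Tendsto (fun n : ℕ => ((1 + ((n:ℝ)+1)⁻¹ : ℝ) : ℂ)) Filter.atTop
        (nhdsWithin 1 {(1:ℂ)}ᶜ) := by
      rw [tendsto_nhdsWithin_iff]
      constructor
      · have h0 : Filter.Tendsto (fun n : ℕ => (1 + ((n:ℝ)+1)⁻¹ : ℝ)) Filter.atTop (nhds 1) := by
          have h1 := tendsto_one_div_add_atTop_nhds_zero_nat (𝕜 := ℝ)
          simp only [one_div] at h1
          simpa using tendsto_const_nhds.add h1
        have h2 := (Complex.continuous_ofReal.tendsto 1).comp h0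
        simpa only [Function.comp_def, Complex.ofReal_one] using h2
      · filter_upwards with n
        simp only [mem_compl_iff, mem_singleton_iff]
        intro h
        have : (1 + ((n:ℝ)+1)⁻¹ : ℝ) = 1 := by exact_mod_cast congrArg Complex.re h
        have hpos : (0:ℝ) < ((n:ℝ)+1)⁻¹ := by positivity
        linarith
    exact hseq.frequently (Filter.Frequently.of_forall
      (fun n => key _ (by positivity)))
  exact hFG hl


/-- Wright function `W_{l,m}(z) = Σ z^n/(n! Γ(l n + m))`. -/
noncomputable def wright (l m z : ℝ) : ℝ :=
  ∑' n : ℕ, z ^ n / ((n.factorial : ℝ) * Real.Gamma (l * n + m))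

/-- Scaled Wright function `ψ_{a,b}(t,s) = t^(b-1) W_{-a,b}(-s t^(-a))`. -/
noncomputable def psiW (a b t s : ℝ) : ℝ :=
  t ^ (b - 1) * wright (-a) b (-(s * t ^ (-a)))

/-- Riemann-Liouville kernel `g_γ(t) = t^(γ-1)/Γ(γ)`. -/
noncomputable def rlK (γ t : ℝ) : ℝ := t ^ (γ - 1) / Real.Gamma γ

/-- Real two-parameter Mittag-Leffler function. -/
noncomputable def mlR (a b z : ℝ) : ℝ := ∑' n : ℕ, z ^ n / Real.Gamma (a * n + b)

/-- Complex two-parameter Mittag-Leffler function. -/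
noncomputable def mlC (a b : ℝ) (z : ℂ) : ℂ :=
  ∑' n : ℕ, z ^ n / Complex.Gamma (a * n + b)

/-- Laplace transform of `t^(β-1) E_{α,β}(ω t^α)` equals `λ^(α-β)/(λ^α-ω)`
for `Re λ > ω^(1/α)`. -/
theorem stmt0 (α β ω : ℝ) (hα : 0 < α) (hβ : 0 < β) (hω : 0 < ω)
    (lam : ℂ) (hlam : ω ^ (1 / α) < lam.re) :
    ∫ t in Set.Ioi (0 : ℝ),
        Complex.exp (-lam * t) * ((t ^ (β - 1) * mlR α β (ω * t ^ α) : ℝ) : ℂ)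
      = lam ^ ((α : ℂ) - β) / (lam ^ (α : ℂ) - ω) := by
  have hr : 0 < lam.re := lt_trans (Real.rpow_pos_of_pos hω _) hlam
  have hlam0 : lam ≠ 0 := fun h => by simp [h] at hr
  have hpow : ∀ x : ℝ, ω ^ (1/α) < x → ω < x ^ α := by
    intro x hx
    have h0 : (0:ℝ) ≤ ω ^ (1/α) := (Real.rpow_pos_of_pos hω _).le
    have h1 := Real.rpow_lt_rpow h0 hx hα
    rwa [← Real.rpow_mul hω.le, one_div, inv_mul_cancel₀ hα.ne', Real.rpow_one] at h1
  have hωr : ω < lam.re ^ α := hpow _ hlam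
  have hωabs : ω < ‖lam‖ ^ α :=
    hpow _ (lt_of_lt_of_le hlam (Complex.re_le_norm lam))
  have hs : ∀ n : ℕ, 0 < α * n + β := fun n => by positivity
  have hΓ : ∀ n : ℕ, 0 < Real.Gamma (α * n + β) := fun n => Real.Gamma_pos_of_pos (hs n)
  set F : ℕ → ℝ → ℂ := fun n t =>
    ((ω ^ n / Real.Gamma (α * n + β) : ℝ) : ℂ) *
      (Complex.exp (-(lam * t)) * ((t ^ (α * n + β - 1) : ℝ) : ℂ)) with hFdef
  -- Step 1: pointwise identity
  have step1 : ∀ t ∈ Ioi (0:ℝ),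
      Complex.exp (-lam * t) * ((t ^ (β - 1) * mlR α β (ω * t ^ α) : ℝ) : ℂ)
        = ∑' n, F n t := by
    intro t ht
    have ht0 : (0:ℝ) < t := ht
    have hml : t ^ (β - 1) * mlR α β (ω * t ^ α)
        = ∑' n : ℕ, (ω ^ n / Real.Gamma (α * n + β)) * t ^ (α * n + β - 1) := by
      rw [mlR, ← tsum_mul_left]
      congr 1
      funext n
      have h1 : (t ^ α) ^ n = t ^ (α * n) := by
        rw [← Real.rpow_natCast (t ^ α) n, ← Real.rpow_mul ht0.le]
      have h2 : t ^ (β - 1) * t ^ (α * n) = t ^ (α * n + β - 1) := by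
        rw [← Real.rpow_add ht0]
        ring_nf
      calc t ^ (β - 1) * ((ω * t ^ α) ^ n / Real.Gamma (α * n + β))
          = (ω ^ n / Real.Gamma (α * n + β)) * (t ^ (β - 1) * (t ^ α) ^ n) := by
            rw [mul_pow]; ring
        _ = (ω ^ n / Real.Gamma (α * n + β)) * t ^ (α * n + β - 1) := by
            rw [h1, h2]
    rw [hml, Complex.ofReal_tsum, ← tsum_mul_left]
    congr 1
    funext n
    rw [hFdef]
    push_cast
    ring
  rw [setIntegral_congr_fun measurableSet_Ioi step1]
  -- Step 2: swap integral and sum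
  have hFint : ∀ n : ℕ, Integrable (F n) (volume.restrict (Ioi 0)) := fun n =>
    (laplace_integrable (hs n) hr).const_mul _
  have hnorm : ∀ n : ℕ, (∫ t in Ioi (0:ℝ), ‖F n t‖)
      = ω ^ n * (1 / lam.re) ^ (α * n + β) := by
    intro n
    have heq : ∀ t ∈ Ioi (0:ℝ), ‖F n t‖
        = (ω ^ n / Real.Gamma (α * n + β)) * (t ^ (α * n + β - 1) * Real.exp (-(lam.re * t))) := by
      intro t ht
      have ht0 : (0:ℝ) < t := ht
      rw [hFdef]
      rw [norm_mul, norm_mul, Complex.norm_real, Complex.norm_exp, Complex.norm_real,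
        Real.norm_of_nonneg (Real.rpow_nonneg ht0.le _),
        Real.norm_of_nonneg (by positivity : (0:ℝ) ≤ ω ^ n / Real.Gamma (α * n + β))]
      have : (-(lam * t)).re = -(lam.re * t) := by simp
      rw [this]
      ring
    rw [setIntegral_congr_fun measurableSet_Ioi heq, integral_const_mul,
      integral_rpow_mul_exp_neg_mul_Ioi (hs n) hr]
    field_simp
  have hsum : Summable fun n : ℕ => ∫ t in Ioi (0:ℝ), ‖F n t‖ := by
    simp_rw [hnorm]
    have h1 : ∀ n : ℕ, ω ^ n * (1 / lam.re) ^ (α * n + β)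
        = (1 / lam.re) ^ (β : ℝ) * (ω * (1 / lam.re) ^ α) ^ n := by
      intro n
      have h2 : ((1 / lam.re : ℝ)) ^ (α * (n:ℝ) + β)
          = ((1 / lam.re) ^ α) ^ n * (1 / lam.re) ^ (β:ℝ) := by
        rw [Real.rpow_add (by positivity), ← Real.rpow_natCast ((1 / lam.re) ^ α) n,
          ← Real.rpow_mul (by positivity)]
      rw [h2, mul_pow]
      ring
    simp_rw [h1]
    apply Summable.mul_left
    apply summable_geometric_of_lt_one (by positivity)
    rw [one_div, Real.inv_rpow hr.le, ← div_eq_mul_inv]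
    exact (div_lt_one (by positivity)).mpr hωr
  have swap := MeasureTheory.integral_tsum_of_summable_integral_norm hFint hsum
  rw [← swap]
  -- Step 3: compute each integral
  have hint : ∀ n : ℕ, (∫ t in Ioi (0:ℝ), F n t)
      = ((ω : ℂ) / lam ^ (α : ℂ)) ^ n * (lam ^ (β : ℂ))⁻¹ := by
    intro n
    rw [hFdef]
    have hΓn : ((Real.Gamma (α * n + β) : ℝ) : ℂ) ≠ 0 := by exact_mod_cast (hΓ n).ne'
    have hA : lam ^ (α:ℂ) ≠ 0 := by simp [Complex.cpow_eq_zero_iff, hlam0]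
    have hB : lam ^ (β:ℂ) ≠ 0 := by simp [Complex.cpow_eq_zero_iff, hlam0]
    rw [MeasureTheory.integral_const_mul, laplace_cpow (hs n) hr]
    have he : (((α * (n:ℝ) + β : ℝ)) : ℂ) = (n:ℕ) * (α:ℂ) + (β:ℂ) := by push_cast; ring
    rw [he, Complex.cpow_add _ _ hlam0, Complex.cpow_nat_mul, div_pow]
    have hAn : (lam ^ (α:ℂ)) ^ n ≠ 0 := pow_ne_zero _ hA
    field_simp
    rw [← Complex.ofReal_mul, div_mul_cancel₀ _ (hΓ n).ne', Complex.ofReal_pow]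
  have habs0 : 0 < ‖lam‖ := norm_pos_iff.mpr hlam0
  have hq : ‖(ω : ℂ) / lam ^ (α:ℂ)‖ < 1 := by
    rw [norm_div, Complex.norm_real, Real.norm_of_nonneg hω.le,
      Complex.norm_cpow_real]
    exact (div_lt_one (Real.rpow_pos_of_pos habs0 _)).mpr hωabs
  have hLω : lam ^ (α:ℂ) - (ω : ℂ) ≠ 0 := by
    rw [sub_ne_zero]
    intro h
    have : ‖lam ^ (α:ℂ)‖ = ω := by
      rw [h, Complex.norm_real, Real.norm_of_nonneg hω.le]
    rw [Complex.norm_cpow_real] at this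
    linarith
  have hA : lam ^ (α:ℂ) ≠ 0 := by simp [Complex.cpow_eq_zero_iff, hlam0]
  have hB : lam ^ (β:ℂ) ≠ 0 := by simp [Complex.cpow_eq_zero_iff, hlam0]
  rw [tsum_congr hint, tsum_mul_right, tsum_geometric_of_norm_lt_one hq,
    Complex.cpow_sub _ _ hlam0]
  field_simp
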